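/- If C is a cycle in the line graph L(G) with at least three edges, then there exists a circuit H of G such that L(G[Ē(H)]) contains C as a subgraph and every edge of H (viewed as a vertex of L(G)) lies on C. -/

import Mathlib

open SimpleGraph

namespace Paper

/-- A graph is traceable if it has a hamiltonian path. -/
def Traceable {α : Type*} (G : SimpleGraph α) : Prop :=
  ∃ (a b : α) (p : G.Walk a b), p.IsPath ∧ ∀ w, w ∈ p.support

/-- A graph is hamiltonian if it has a hamiltonian cycle. -/
def HamGraph {α : Type*} (G : SimpleGraph α) : Prop :=
  ∃ (a : α) (p : G.Walk a a), p.IsCycle ∧ ∀ w, w ∈ p.support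

/-- A graph together with its (varying) vertex type. -/
def GraphSys : Type 1 := Σ V : Type, SimpleGraph V

/-- One application of the line-graph operator. -/
def lineStep (p : GraphSys) : GraphSys := ⟨p.2.edgeSet, p.2.lineGraph⟩

/-- The `n`-th iterated line graph (with `L^0(G) = G`). -/
def iterLine (p : GraphSys) (n : ℕ) : GraphSys := lineStep^[n] p

/-- The hamiltonian path index: the least `n` with `L^n(G)` traceable. -/
noncomputable def hp {V : Type} (G : SimpleGraph V) : ℕ :=
  sInf {n | Traceable (iterLine ⟨V, G⟩ n).2}

/-- The hamiltonian index: the least `n` with `L^n(G)` hamiltonian. -/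
noncomputable def hIndex {V : Type} (G : SimpleGraph V) : ℕ :=
  sInf {n | HamGraph (iterLine ⟨V, G⟩ n).2}

/-- Degree of `v` in a subgraph `H` (number of neighbours). -/
noncomputable def sdeg {V : Type*} {G : SimpleGraph V} (H : G.Subgraph) (v : V) : ℕ :=
  (H.neighborSet v).ncard

/-- Degree of `v` in `G` (number of neighbours). -/
noncomputable def gdeg {V : Type*} (G : SimpleGraph V) (v : V) : ℕ :=
  (G.neighborSet v).ncard

/-- `Ē(H)`: the set of edges of `G` incident with a vertex of `H`. -/
def barE {V : Type*} (G : SimpleGraph V) (H : G.Subgraph) : Set (Sym2 V) :=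
  {e | e ∈ G.edgeSet ∧ ∃ v ∈ H.verts, v ∈ e}

/-- A circuit: a connected subgraph in which every vertex has even degree
(`K₁` counts as a circuit). -/
def IsCircuit {V : Type*} {G : SimpleGraph V} (H : G.Subgraph) : Prop :=
  H.Connected ∧ ∀ v, Even (sdeg H v)

/-- A branch of `G`: a nontrivial path whose ends have degree `≠ 2` and whose
internal vertices have degree `2`. -/
def IsBranch {V : Type*} (G : SimpleGraph V) {u v : V} (p : G.Walk u v) : Prop :=
  p.IsPath ∧ 0 < p.length ∧ gdeg G u ≠ 2 ∧ gdeg G v ≠ 2 ∧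
    ∀ w ∈ p.support, w ≠ u → w ≠ v → gdeg G w = 2

/-- The family `EUP_k(G)` of subgraphs satisfying (I'), (II), (III), (IV), (V'). -/
def EUP {V : Type*} (G : SimpleGraph V) (k : ℕ) : Set (G.Subgraph) :=
  {H | {v | Odd (sdeg H v)}.ncard ≤ 2 ∧
    (∀ v ∈ H.verts, H.neighborSet v = ∅ → 3 ≤ gdeg G v) ∧
    (∀ v, 3 ≤ gdeg G v → v ∈ H.verts) ∧
    (∀ H1 : G.Subgraph, H1 ≤ H → H1.verts.Nonempty → (H.verts \ H1.verts).Nonempty →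
      ∃ a ∈ H1.verts, ∃ b ∈ H.verts \ H1.verts, G.dist a b ≤ k - 1) ∧
    (∀ (u v : V) (p : G.Walk u v), IsBranch G p →
      (∀ e ∈ p.edges, e ∉ H.edgeSet) → p.length ≤ k + 1) ∧
    (∀ (u v : V) (p : G.Walk u v), IsBranch G p → (∃ w ∈ p.support, gdeg G w = 1) →
      (∀ e ∈ p.edges, e ∉ H.edgeSet) → p.length ≤ k)}

/-- The family `EU_k(G)` of subgraphs satisfying (I), (II), (III), (IV), (V). -/
def EU {V : Type*} (G : SimpleGraph V) (k : ℕ) : Set (G.Subgraph) :=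
  {H | (∀ v, Even (sdeg H v)) ∧
    (∀ v ∈ H.verts, H.neighborSet v = ∅ → 3 ≤ gdeg G v) ∧
    (∀ v, 3 ≤ gdeg G v → v ∈ H.verts) ∧
    (∀ H1 : G.Subgraph, H1 ≤ H → H1.verts.Nonempty → (H.verts \ H1.verts).Nonempty →
      ∃ a ∈ H1.verts, ∃ b ∈ H.verts \ H1.verts, G.dist a b ≤ k - 1) ∧
    (∀ (u v : V) (p : G.Walk u v), IsBranch G p →
      (∀ e ∈ p.edges, e ∉ H.edgeSet) → p.length ≤ k + 1) ∧
    (∀ (u v : V) (p : G.Walk u v), IsBranch G p → (∃ w ∈ p.support, gdeg G w = 1) →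
      p.length ≤ k)}
/-- For a trail, the degree of `x` in `p.toSubgraph` equals the number of edges of `p`
containing `x`. -/
lemma ncard_neighborSet_toSubgraph_eq_countP {V : Type*} [DecidableEq V] {G : SimpleGraph V}
    {u v : V} {p : G.Walk u v} (ht : p.IsTrail) (x : V) :
    (p.toSubgraph.neighborSet x).ncard = p.edges.countP (fun e => x ∈ e) := by
  have himg : (fun w => s(x, w)) '' (p.toSubgraph.neighborSet x)
      = {e | e ∈ p.edges.filter (fun e => x ∈ e)} := by
    ext e
    constructor
    · rintro ⟨w, hw, rfl⟩
      simp only [Set.mem_setOf_eq, List.mem_filter, decide_eq_true_eq]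
      exact ⟨(Walk.mem_edges_toSubgraph p).mp (Subgraph.mem_edgeSet.mpr hw), by simp⟩
    · intro he
      simp only [Set.mem_setOf_eq, List.mem_filter, decide_eq_true_eq] at he
      obtain ⟨he, hx⟩ := he
      induction e with
      | _ a b =>
        rw [Sym2.mem_iff] at hx
        obtain rfl | rfl := hx
        · exact ⟨b, Subgraph.mem_edgeSet.mp ((Walk.mem_edges_toSubgraph p).mpr he), rfl⟩
        · refine ⟨a, Subgraph.mem_edgeSet.mp ((Walk.mem_edges_toSubgraph p).mpr ?_),
            Sym2.eq_swap⟩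
          rwa [Sym2.eq_swap]
  have hinj : Function.Injective (fun w => s(x, w)) := fun a b h => by
    simpa using Sym2.congr_right.mp h
  have h1 : (p.toSubgraph.neighborSet x).ncard
      = ({e | e ∈ p.edges.filter (fun e => x ∈ e)} : Set (Sym2 V)).ncard := by
    rw [← himg, Set.ncard_image_of_injective _ hinj]
  rw [h1]
  have hnd : (p.edges.filter (fun e => x ∈ e)).Nodup := ht.edges_nodup.filter _
  have h2 : ({e | e ∈ p.edges.filter (fun e => x ∈ e)} : Set (Sym2 V))
      = ((p.edges.filter (fun e => x ∈ e)).toFinset : Set (Sym2 V)) := by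
    ext e; simp
  rw [h2, Set.ncard_coe_finset, List.toFinset_card_of_nodup hnd,
    List.countP_eq_length_filter]

/-- Key construction: from a walk in the line graph starting at `a` and a vertex `x ∈ a`,
produce a walk in `G` starting at `x`, ending in the last edge, whose edges form a sublist of
the (coerced) support-minus-last of the line-graph walk, and whose support meets every edge
in the line-graph walk's support. -/
lemma key {V : Type*} {G : SimpleGraph V} {a b : G.edgeSet} (Q : G.lineGraph.Walk a b) :
    ∀ x ∈ (a : Sym2 V), ∃ y, y ∈ (b : Sym2 V) ∧ ∃ p : G.Walk x y,
      List.Sublist p.edges (Q.support.dropLast.map Subtype.val) ∧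
      ∀ c ∈ Q.support, ∃ v ∈ p.support, v ∈ (c : Sym2 V) := by
  induction Q with
  | nil =>
    intro x hx
    exact ⟨x, hx, Walk.nil, by simp, by simpa using hx⟩
  | @cons a a' b h Q' ih =>
    intro x hx
    have hsupp : (Walk.cons h Q').support = a :: Q'.support := Walk.support_cons h Q'
    have hdl : (Walk.cons h Q').support.dropLast = a :: Q'.support.dropLast := by
      rw [hsupp, List.dropLast_cons_of_ne_nil (Q'.support_ne_nil)]
    by_cases hxa' : x ∈ (a' : Sym2 V)
    · obtain ⟨y, hy, p, hsub, hcov⟩ := ih x hxa'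
      refine ⟨y, hy, p, ?_, ?_⟩
      · rw [hdl, List.map_cons]
        exact hsub.cons _
      · intro c hc
        rw [hsupp, List.mem_cons] at hc
        obtain rfl | hc := hc
        · exact ⟨x, p.start_mem_support, hx⟩
        · exact hcov c hc
    · obtain ⟨hne, z, hza, hza'⟩ := lineGraph_adj_iff_exists.mp h
      have hxz : x ≠ z := fun hh => hxa' (hh ▸ hza')
      have hea : (a : Sym2 V) = s(x, z) := (Sym2.mem_and_mem_iff hxz).mp ⟨hx, hza⟩
      have hadj : G.Adj x z := by
        rw [← G.mem_edgeSet, ← hea]; exact a.2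
      obtain ⟨y, hy, p, hsub, hcov⟩ := ih z hza'
      refine ⟨y, hy, Walk.cons hadj p, ?_, ?_⟩
      · rw [hdl, List.map_cons, Walk.edges_cons, ← hea]
        exact hsub.cons₂ _
      · intro c hc
        rw [hsupp, List.mem_cons] at hc
        obtain rfl | hc := hc
        · exact ⟨x, Walk.start_mem_support _, hx⟩
        · obtain ⟨v, hv, hvc⟩ := hcov c hc
          exact ⟨v, by rw [Walk.support_cons]; exact List.mem_cons_of_mem _ hv, hvc⟩

/-- If `C` is a cycle of `L(G)` with at least three edges, then `S(G,C)` is nonempty: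
there is a circuit `H` of `G` such that `L(G[Ē(H)])` contains `C` and `C` contains all
elements of `E(H)`. -/
theorem stmt4 {V : Type*} (G : SimpleGraph V) {e : G.edgeSet}
    (C : G.lineGraph.Walk e e) (hC : C.IsCycle) (h3 : 3 ≤ C.length) :
    ∃ H : G.Subgraph, IsCircuit H ∧
      (∀ f ∈ C.support, (f : Sym2 V) ∈ barE G H) ∧
      (∀ e' ∈ H.edgeSet, ∃ f ∈ C.support, (f : Sym2 V) = e') := by
  classical
  revert hC h3
  cases C with
  | nil => intro _ h3; simp at h3
  | @cons _ e₁ _ h C' =>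
    intro hC h3
    obtain ⟨hne, z, hze, hze₁⟩ := lineGraph_adj_iff_exists.mp h
    obtain ⟨y, hy, p, hsub, hcov⟩ := key C' z hze₁
    have htail : (Walk.cons h C').support.tail = C'.support := by
      rw [Walk.support_cons, List.tail_cons]
    have hnd : C'.support.Nodup := htail ▸ hC.support_nodup
    have hnddl : (C'.support.dropLast.map (Subtype.val (p := fun x => x ∈ G.edgeSet))).Nodup := by
      refine List.Nodup.map (fun f g hfg => Subtype.ext hfg) ?_
      exact hnd.sublist (List.dropLast_sublist _)
    have hpt : p.IsTrail := ⟨hnddl.sublist hsub⟩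
    have hlast : C'.support.getLast (C'.support_ne_nil) = e := C'.getLast_support
    have hce : C'.support.dropLast ++ [e] = C'.support := by
      have h0 := List.dropLast_concat_getLast (C'.support_ne_nil)
      rw [hlast] at h0
      exact h0
    have hemem : e ∉ C'.support.dropLast := by
      intro hmem
      have hnd2 := hce ▸ hnd
      rw [List.nodup_append] at hnd2
      exact hnd2.2.2 e hmem e (List.mem_singleton.mpr rfl) rfl
    have henp : (e : Sym2 V) ∉ p.edges := by
      intro hmem
      obtain ⟨f, hf, hfe⟩ := List.mem_map.mp (hsub.subset hmem)
      exact hemem (Subtype.ext hfe ▸ hf)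
    obtain ⟨q, hqt, hqe, hqs⟩ :
        ∃ q : G.Walk z z, q.IsTrail ∧
          (∀ e' ∈ q.edges, e' ∈ p.edges ∨ e' = (e : Sym2 V)) ∧
          p.support ⊆ q.support := by
      by_cases hyz : y = z
      · subst hyz
        exact ⟨p, hpt, fun e' he' => Or.inl he', fun _ hh => hh⟩
      · have heyz : (e : Sym2 V) = s(y, z) := (Sym2.mem_and_mem_iff hyz).mp ⟨hy, hze⟩
        have hadj : G.Adj y z := by rw [← G.mem_edgeSet, ← heyz]; exact e.2
        refine ⟨p.append (Walk.cons hadj Walk.nil), ⟨?_⟩, ?_, ?_⟩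
        · rw [Walk.edges_append, Walk.edges_cons, Walk.edges_nil, List.nodup_append]
          refine ⟨hpt.edges_nodup, List.nodup_singleton _, fun e' he' => ?_⟩
          simp only [List.mem_singleton]
          rintro _ rfl rfl
          exact henp (heyz ▸ he')
        · intro e' he'
          rw [Walk.edges_append, List.mem_append] at he'
          obtain he' | he' := he'
          · exact Or.inl he'
          · simp only [Walk.edges_cons, Walk.edges_nil, List.mem_singleton] at he'
            exact Or.inr (he' ▸ heyz.symm)
        · intro v hv
          rw [Walk.support_append]
          exact List.mem_append_left _ hv
    refine ⟨q.toSubgraph, ⟨q.toSubgraph_connected, ?_⟩, ?_, ?_⟩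
    · intro v
      rw [sdeg, ncard_neighborSet_toSubgraph_eq_countP hqt v]
      rw [hqt.even_countP_edges_iff v]
      intro hzz
      exact absurd rfl hzz
    · intro f hf
      rw [Walk.support_cons, List.mem_cons] at hf
      refine ⟨f.2, ?_⟩
      obtain rfl | hf := hf
      · exact ⟨z, (Walk.mem_verts_toSubgraph q).mpr q.start_mem_support, hze⟩
      · obtain ⟨v, hv, hvf⟩ := hcov f hf
        exact ⟨v, (Walk.mem_verts_toSubgraph q).mpr (hqs hv), hvf⟩
    · intro e' he'
      have he'' : e' ∈ q.edges := (Walk.mem_edges_toSubgraph q).mp he'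
      obtain hmem | rfl := hqe e' he''
      · obtain ⟨f, hf, hfe⟩ := List.mem_map.mp (hsub.subset hmem)
        refine ⟨f, ?_, hfe⟩
        rw [Walk.support_cons]
        exact List.mem_cons_of_mem _ ((List.dropLast_sublist _).subset hf)
      · exact ⟨e, by rw [Walk.support_cons]; exact List.mem_cons_self, rfl⟩
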